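/- Let n ≥ 3, ℓ ≥ 1, and let f : {0,1}^ℓ → {0,1}^{n+1} be any function. Suppose there exist a set S ⊆ {1,…,n} with |S| ≥ 3 and an integer c such that Σ_{j∈S} f(u)_j = c for every u ∈ {0,1}^ℓ. Then for every function g : {0,1}^n → {0,1}, the total variation distance between the distribution of f(U), where U is uniform on {0,1}^ℓ, and the distribution of (X, g(X)), where X is uniform on {0,1}^n, is at least 5/8. -/
import Mathlib

open Finset

/-- Distribution of `f(U)` for `U` uniform on `{0,1}^ℓ`. -/
noncomputable def pushU {ℓ : ℕ} {S : Type*} [Fintype S] [DecidableEq S]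
    (f : (Fin ℓ → Bool) → S) (a : S) : ℝ :=
  ((univ.filter (fun u => f u = a)).card : ℝ) / 2 ^ ℓ

/-- Total variation distance between two distributions on a finite set. -/
noncomputable def tvd {S : Type*} [Fintype S] (μ ν : S → ℝ) : ℝ :=
  (1 / 2) * ∑ a, |μ a - ν a|

lemma choose_bound : ∀ s : ℕ, 3 ≤ s → ∀ k, 8 * Nat.choose s k ≤ 3 * 2 ^ s := by
  intro s
  induction s with
  | zero => omega
  | succ m ih =>
    intro hs k
    rcases Nat.lt_or_ge m 3 with hm | hm
    · have hm2 : m = 2 := by omega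
      subst hm2
      have h1 : Nat.choose 3 k ≤ Nat.choose 3 1 := by
        simpa using Nat.choose_le_middle k 3
      norm_num [Nat.choose] at h1 ⊢
      omega
    · cases k with
      | zero =>
        have h16 : 16 ≤ 2 ^ (m + 1) := by
          calc (16 : ℕ) = 2 ^ 4 := rfl
            _ ≤ 2 ^ (m + 1) := Nat.pow_le_pow_right (by norm_num) (by omega)
        simp [Nat.choose]
        omega
      | succ k' =>
        rw [Nat.choose_succ_succ]
        have h1 := ih hm k'
        have h2 := ih hm (k' + 1)
        have hp : (2 : ℕ) ^ (m + 1) = 2 ^ m + 2 ^ m := by ring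
        simp only [Nat.succ_eq_add_one]
        omega

/-- Counting boolean functions with fixed integer sum. -/
lemma count_funcs (α : Type*) [Fintype α] [DecidableEq α] (c : ℤ)
    (hcard : 3 ≤ Fintype.card α) :
    8 * (univ.filter fun y : α → Bool =>
        (∑ i, (if y i then 1 else 0 : ℤ)) = c).card ≤ 3 * 2 ^ Fintype.card α := by
  classical
  have hinj : (univ.filter fun y : α → Bool =>
      (∑ i, (if y i then 1 else 0 : ℤ)) = c).card
      ≤ (Fintype.card α).choose c.toNat := by
    have hmem : ∀ y ∈ (univ.filter fun y : α → Bool =>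
        (∑ i, (if y i then 1 else 0 : ℤ)) = c),
        univ.filter (fun i => y i = true) ∈ Finset.powersetCard c.toNat univ := by
      intro y hy
      rw [Finset.mem_filter] at hy
      have hsum := hy.2
      rw [Finset.sum_boole] at hsum
      rw [Finset.mem_powersetCard_univ]
      omega
    have hinj2 : Set.InjOn (fun y : α → Bool => univ.filter (fun i => y i = true))
        ↑(univ.filter fun y : α → Bool => (∑ i, (if y i then 1 else 0 : ℤ)) = c) := by
      intro y1 h1 y2 h2 he
      have he' : univ.filter (fun i => y1 i = true)
          = univ.filter (fun i => y2 i = true) := he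
      funext i
      have hii : (i ∈ univ.filter fun i => y1 i = true) ↔
          (i ∈ univ.filter fun i => y2 i = true) := by rw [he']
      simp only [Finset.mem_filter, Finset.mem_univ, true_and] at hii
      cases hy1 : y1 i <;> cases hy2 : y2 i <;> simp_all
    have hmain := Finset.card_le_card_of_injOn _ hmem hinj2
    simpa [Finset.card_powersetCard] using hmain
  calc 8 * (univ.filter fun y : α → Bool =>
        (∑ i, (if y i then 1 else 0 : ℤ)) = c).card
      ≤ 8 * (Fintype.card α).choose c.toNat := Nat.mul_le_mul_left 8 hinj
    _ ≤ 3 * 2 ^ Fintype.card α := choose_bound (Fintype.card α) hcard c.toNat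

/-- Counting on `Fin n → Bool` restricted to a subset of coordinates. -/
lemma count_main (n : ℕ) (S : Finset (Fin n)) (hS : 3 ≤ S.card) (c : ℤ) :
    8 * (univ.filter fun x : Fin n → Bool =>
        (∑ j ∈ S, (if x j then 1 else 0 : ℤ)) = c).card ≤ 3 * 2 ^ n := by
  classical
  have hcoe : Fintype.card {j // j ∈ S} = S.card := Fintype.card_coe S
  set Qf : Finset ({j // j ∈ S} → Bool) :=
    univ.filter fun y => (∑ i : {j // j ∈ S}, (if y i then 1 else 0 : ℤ)) = c with hQf
  have step1 : 8 * Qf.card ≤ 3 * 2 ^ S.card := by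
    have := count_funcs {j // j ∈ S} c (by omega)
    rwa [hcoe] at this
  have hcc : Fintype.card {j // j ∉ S} = n - S.card := by
    have := Fintype.card_subtype_compl (fun j : Fin n => j ∈ S)
    simpa [hcoe] using this
  have step2 : (univ.filter fun x : Fin n → Bool =>
      (∑ j ∈ S, (if x j then 1 else 0 : ℤ)) = c).card ≤ Qf.card * 2 ^ (n - S.card) := by
    set F : (Fin n → Bool) → ({j // j ∈ S} → Bool) × ({j // j ∉ S} → Bool) :=
      fun x => (fun i => x i.1, fun i => x i.1) with hF
    have hmem : ∀ x ∈ (univ.filter fun x : Fin n → Bool =>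
        (∑ j ∈ S, (if x j then 1 else 0 : ℤ)) = c), F x ∈ Qf ×ˢ univ := by
      intro x hx
      rw [Finset.mem_filter] at hx
      rw [Finset.mem_product]
      refine ⟨?_, Finset.mem_univ _⟩
      rw [hQf, Finset.mem_filter]
      refine ⟨Finset.mem_univ _, ?_⟩
      show (∑ i : {j // j ∈ S}, (if x i.1 then 1 else 0 : ℤ)) = c
      rw [Finset.sum_coe_sort S (fun j => (if x j then 1 else 0 : ℤ))]
      exact hx.2
    have hinj2 : Set.InjOn F ↑(univ.filter fun x : Fin n → Bool =>
        (∑ j ∈ S, (if x j then 1 else 0 : ℤ)) = c) := by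
      intro x1 h1 x2 h2 he
      rw [hF, Prod.mk.injEq] at he
      funext j
      by_cases hj : j ∈ S
      · exact congrFun he.1 ⟨j, hj⟩
      · exact congrFun he.2 ⟨j, hj⟩
    have hmain := Finset.card_le_card_of_injOn F hmem hinj2
    have hcard2 : (univ : Finset ({j // j ∉ S} → Bool)).card = 2 ^ (n - S.card) := by
      rw [Finset.card_univ, Fintype.card_fun, hcc, Fintype.card_bool]
    rwa [Finset.card_product, hcard2] at hmain
  have hSn : S.card ≤ n := by simpa using Finset.card_le_univ S
  calc 8 * (univ.filter fun x : Fin n → Bool =>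
        (∑ j ∈ S, (if x j then 1 else 0 : ℤ)) = c).card
      ≤ 8 * (Qf.card * 2 ^ (n - S.card)) := Nat.mul_le_mul_left 8 step2
    _ = (8 * Qf.card) * 2 ^ (n - S.card) := by ring
    _ ≤ (3 * 2 ^ S.card) * 2 ^ (n - S.card) := Nat.mul_le_mul_right _ step1
    _ = 3 * 2 ^ n := by rw [mul_assoc, ← pow_add, Nat.add_sub_cancel' hSn]

/-- Mass of a pushforward on a set. -/
lemma pushU_sum_mem {ℓ : ℕ} {S : Type*} [Fintype S] [DecidableEq S]
    (f : (Fin ℓ → Bool) → S) (A : Finset S) :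
    ∑ a ∈ A, pushU f a = ((univ.filter fun u => f u ∈ A).card : ℝ) / 2 ^ ℓ := by
  classical
  have hfib : (univ.filter fun u => f u ∈ A).card
      = ∑ a ∈ A, ((univ.filter fun u => f u ∈ A).filter fun u => f u = a).card :=
    Finset.card_eq_sum_card_fiberwise (fun u hu => (Finset.mem_filter.mp hu).2)
  have hfe : ∀ a ∈ A, ((univ.filter fun u => f u ∈ A).filter fun u => f u = a)
      = univ.filter fun u => f u = a := by
    intro a ha
    rw [Finset.filter_filter]
    apply Finset.filter_congr
    intro u _
    exact ⟨fun hx => hx.2, fun hx => ⟨hx ▸ ha, hx⟩⟩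
  have hfib' : (univ.filter fun u => f u ∈ A).card
      = ∑ a ∈ A, (univ.filter fun u => f u = a).card := by
    rw [hfib]
    exact Finset.sum_congr rfl fun a ha => by rw [hfe a ha]
  rw [hfib']
  push_cast
  rw [Finset.sum_div]
  rfl

lemma pushU_nonneg {ℓ : ℕ} {S : Type*} [Fintype S] [DecidableEq S]
    (f : (Fin ℓ → Bool) → S) (a : S) : 0 ≤ pushU f a :=
  div_nonneg (Nat.cast_nonneg _) (by positivity)

theorem stmt5 (n ℓ : ℕ) (hn : 3 ≤ n) (hℓ : 1 ≤ ℓ)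
    (f : (Fin ℓ → Bool) → (Fin (n + 1) → Bool))
    (S : Finset (Fin n)) (hS : 3 ≤ S.card) (c : ℤ)
    (hfix : ∀ u : Fin ℓ → Bool,
      (∑ j ∈ S, (if f u j.castSucc then 1 else 0 : ℤ)) = c)
    (g : (Fin n → Bool) → Bool) :
    5 / 8 ≤ tvd (pushU f) (pushU fun x : Fin n → Bool => Fin.snoc x (g x)) := by
  classical
  set h : (Fin n → Bool) → (Fin (n+1) → Bool) := fun x => Fin.snoc x (g x) with hh
  set μ := pushU f with hμ
  set ν := pushU h with hν
  set P : (Fin (n+1) → Bool) → Prop :=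
    fun a => (∑ j ∈ S, (if a j.castSucc then 1 else 0 : ℤ)) = c with hP
  set A : Finset (Fin (n+1) → Bool) := univ.filter (fun a => P a) with hA
  -- μ(A) = 1
  have hμA : ∑ a ∈ A, μ a = 1 := by
    rw [hμ, pushU_sum_mem]
    have : (univ.filter fun u => f u ∈ A) = univ := by
      apply Finset.filter_true_of_mem
      intro u _
      rw [hA, Finset.mem_filter]
      exact ⟨Finset.mem_univ _, hfix u⟩
    rw [this, Finset.card_univ, Fintype.card_fun, Fintype.card_bool, Fintype.card_fin]
    simp
  -- total masses are 1
  have htot : ∀ (m : ℕ) (φ : (Fin m → Bool) → (Fin (n+1) → Bool)),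
      ∑ a, pushU φ a = 1 := by
    intro m φ
    have h1 := pushU_sum_mem φ (univ : Finset (Fin (n+1) → Bool))
    have h2 : (univ.filter fun u => φ u ∈ (univ : Finset (Fin (n+1) → Bool))) = univ :=
      Finset.filter_true_of_mem (fun u _ => Finset.mem_univ _)
    rw [h2, Finset.card_univ, Fintype.card_fun, Fintype.card_bool, Fintype.card_fin] at h1
    rw [h1]
    push_cast
    rw [div_self (by positivity)]
  have hμtot : ∑ a, μ a = 1 := htot ℓ f
  have hνtot : ∑ a, ν a = 1 := htot n h
  -- ν(A) ≤ 3/8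
  have hsnoc : ∀ x : Fin n → Bool,
      (∑ j ∈ S, (if h x j.castSucc then 1 else 0 : ℤ))
        = ∑ j ∈ S, (if x j then 1 else 0 : ℤ) := by
    intro x
    refine Finset.sum_congr rfl fun j _ => ?_
    rw [hh]
    simp [Fin.snoc_castSucc]
  have hνA : ∑ a ∈ A, ν a ≤ 3 / 8 := by
    rw [hν, pushU_sum_mem]
    have hAR : (univ.filter fun x => h x ∈ A)
        = univ.filter (fun x : Fin n → Bool =>
            (∑ j ∈ S, (if x j then 1 else 0 : ℤ)) = c) := by
      apply Finset.filter_congr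
      intro x _
      simp only [hA, Finset.mem_filter, Finset.mem_univ, true_and, hP]
      rw [hsnoc x]
    have hc := count_main n S hS c
    rw [hAR, div_le_div_iff₀ (by positivity) (by norm_num)]
    have hcr : (8 : ℝ) * (univ.filter (fun x : Fin n → Bool =>
        (∑ j ∈ S, (if x j then 1 else 0 : ℤ)) = c)).card ≤ 3 * 2 ^ n := by
      exact_mod_cast hc
    linarith
  -- complements
  have hνcompl : ∑ a ∈ univ.filter (fun a => ¬ P a), ν a = 1 - ∑ a ∈ A, ν a := by
    have hs := Finset.sum_filter_add_sum_filter_not univ (fun a => P a) ν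
    rw [← hA] at hs
    rw [hνtot] at hs
    linarith
  have hμcompl : ∑ a ∈ univ.filter (fun a => ¬ P a), μ a = 0 := by
    have hs := Finset.sum_filter_add_sum_filter_not univ (fun a => P a) μ
    rw [← hA] at hs
    rw [hμtot] at hs
    linarith
  -- final computation
  show 5 / 8 ≤ tvd μ ν
  simp only [tvd]
  have hsplit := Finset.sum_filter_add_sum_filter_not univ (fun a => P a)
    (fun a => |μ a - ν a|)
  rw [← hA] at hsplit
  have h1 : ∑ a ∈ A, (μ a - ν a) ≤ ∑ a ∈ A, |μ a - ν a| :=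
    Finset.sum_le_sum fun a _ => le_abs_self _
  have h2 : ∑ a ∈ univ.filter (fun a => ¬ P a), (ν a - μ a)
      ≤ ∑ a ∈ univ.filter (fun a => ¬ P a), |μ a - ν a| :=
    Finset.sum_le_sum fun a _ => by rw [abs_sub_comm]; exact le_abs_self _
  rw [Finset.sum_sub_distrib] at h1 h2
  linarith
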